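/- (Corollary 5.2) Let L, M, N, g₁₁, g₁₂, g₂₂ be twice continuously differentiable on W × (0,T) ⊂ ℝ² × ℝ with det g := g₁₁g₂₂ − g₁₂² > 0 and M < 0 everywhere, and suppose that for each t the Gauss–Codazzi equations hold. Define u := √(½(−(L−N) + √((L−N)² + 4M²))), v := √(½((L−N) + √((L−N)² + 4M²))), and p := L − v² (which equals N − u²). Suppose further that: ∂_t u = Γ¹₂₂L − 2Γ¹₁₂M + Γ¹₁₁N, ∂_t v = Γ²₂₂L − 2Γ²₁₂M + Γ²₁₁N, and ∂₁₁(u²) + 2∂₁₂(uv) + ∂₂₂(v²) = −(∂₁₁p + ∂₂₂p). Then (u, v, p) satisfies the momentum equations ∂₁(u²+p)+∂₂(uv) = −∂_t u and ∂₁(uv)+∂₂(v²+p) = −∂_t v, and ∂_t(∂₁u + ∂₂v) = 0; in particular, if ∂₁u + ∂₂v = 0 at some time t₀ ∈ (0,T), then (u, v, p) satisfies the full incompressible Euler equations on W × (0,T). -/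

import Mathlib

noncomputable def pdx1 (f : ℝ × ℝ × ℝ → ℝ) (q : ℝ × ℝ × ℝ) : ℝ :=
  deriv (fun s => f (s, q.2.1, q.2.2)) q.1

noncomputable def pdx2 (f : ℝ × ℝ × ℝ → ℝ) (q : ℝ × ℝ × ℝ) : ℝ :=
  deriv (fun s => f (q.1, s, q.2.2)) q.2.1

noncomputable def pdt (f : ℝ × ℝ × ℝ → ℝ) (q : ℝ × ℝ × ℝ) : ℝ :=
  deriv (fun s => f (q.1, q.2.1, s)) q.2.2

/-- Determinant of the metric `g₁₁g₂₂ - g₁₂²`. -/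
noncomputable def detg (g11 g12 g22 : ℝ × ℝ × ℝ → ℝ) (q : ℝ × ℝ × ℝ) : ℝ :=
  g11 q * g22 q - (g12 q) ^ 2

/-- Christoffel symbol Γ¹₁₁. -/
noncomputable def Gamma1_11 (g11 g12 g22 : ℝ × ℝ × ℝ → ℝ) (q : ℝ × ℝ × ℝ) : ℝ :=
  (g22 q * pdx1 g11 q - g12 q * (2 * pdx1 g12 q - pdx2 g11 q)) / (2 * detg g11 g12 g22 q)

/-- Christoffel symbol Γ¹₁₂. -/
noncomputable def Gamma1_12 (g11 g12 g22 : ℝ × ℝ × ℝ → ℝ) (q : ℝ × ℝ × ℝ) : ℝ :=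
  (g22 q * pdx2 g11 q - g12 q * pdx1 g22 q) / (2 * detg g11 g12 g22 q)

/-- Christoffel symbol Γ¹₂₂. -/
noncomputable def Gamma1_22 (g11 g12 g22 : ℝ × ℝ × ℝ → ℝ) (q : ℝ × ℝ × ℝ) : ℝ :=
  (g22 q * (2 * pdx2 g12 q - pdx1 g22 q) - g12 q * pdx2 g22 q) / (2 * detg g11 g12 g22 q)

/-- Christoffel symbol Γ²₁₁. -/
noncomputable def Gamma2_11 (g11 g12 g22 : ℝ × ℝ × ℝ → ℝ) (q : ℝ × ℝ × ℝ) : ℝ :=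
  (-(g12 q) * pdx1 g11 q + g11 q * (2 * pdx1 g12 q - pdx2 g11 q)) / (2 * detg g11 g12 g22 q)

/-- Christoffel symbol Γ²₁₂. -/
noncomputable def Gamma2_12 (g11 g12 g22 : ℝ × ℝ × ℝ → ℝ) (q : ℝ × ℝ × ℝ) : ℝ :=
  (-(g12 q) * pdx2 g11 q + g11 q * pdx1 g22 q) / (2 * detg g11 g12 g22 q)

/-- Christoffel symbol Γ²₂₂. -/
noncomputable def Gamma2_22 (g11 g12 g22 : ℝ × ℝ × ℝ → ℝ) (q : ℝ × ℝ × ℝ) : ℝ :=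
  (-(g12 q) * (2 * pdx2 g12 q - pdx1 g22 q) + g11 q * pdx2 g22 q) / (2 * detg g11 g12 g22 q)

/-- Gauss curvature of `g` via the Brioschi formula (spatial derivatives). -/
noncomputable def brioschi (g11 g12 g22 : ℝ × ℝ × ℝ → ℝ) (q : ℝ × ℝ × ℝ) : ℝ :=
  (1 / (2 * (detg g11 g12 g22 q) ^ 2)) *
    Matrix.det !![-(pdx2 (pdx2 g11) q) + 2 * pdx1 (pdx2 g12) q - pdx1 (pdx1 g22) q,
                    pdx1 g11 q, 2 * pdx1 g12 q - pdx2 g11 q;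
                  2 * pdx2 g12 q - pdx1 g22 q, 2 * g11 q, 2 * g12 q;
                  pdx2 g22 q, 2 * g12 q, 2 * g22 q]
  - (1 / (2 * (detg g11 g12 g22 q) ^ 2)) *
    Matrix.det !![0, pdx2 g11 q, pdx1 g22 q;
                  pdx2 g11 q, 2 * g11 q, 2 * g12 q;
                  pdx1 g22 q, 2 * g12 q, 2 * g22 q]

/-- The Gauss–Codazzi equations for `(L, M, N)` and the metric `g` at the point `q`. -/
def GaussCodazzi (L M N g11 g12 g22 : ℝ × ℝ × ℝ → ℝ) (q : ℝ × ℝ × ℝ) : Prop :=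
  pdx1 N q - pdx2 M q =
    -(Gamma1_22 g11 g12 g22 q) * L q + 2 * Gamma1_12 g11 g12 g22 q * M q
      - Gamma1_11 g11 g12 g22 q * N q ∧
  pdx1 M q - pdx2 L q =
    Gamma2_22 g11 g12 g22 q * L q - 2 * Gamma2_12 g11 g12 g22 q * M q
      + Gamma2_11 g11 g12 g22 q * N q ∧
  L q * N q - (M q) ^ 2 = brioschi g11 g12 g22 q

namespace Cor52

abbrev e1 : ℝ × ℝ × ℝ := (1, 0, 0)
abbrev e2 : ℝ × ℝ × ℝ := (0, 1, 0)
abbrev e3 : ℝ × ℝ × ℝ := (0, 0, 1)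

lemma hasDerivAt_c1 (a b : ℝ) (s : ℝ) :
    HasDerivAt (fun s : ℝ => ((s, a, b) : ℝ × ℝ × ℝ)) e1 s :=
  HasDerivAt.prodMk (hasDerivAt_id s) (HasDerivAt.prodMk (hasDerivAt_const s a) (hasDerivAt_const s b))

lemma hasDerivAt_c2 (a b : ℝ) (s : ℝ) :
    HasDerivAt (fun s : ℝ => ((a, s, b) : ℝ × ℝ × ℝ)) e2 s :=
  HasDerivAt.prodMk (hasDerivAt_const s a) (HasDerivAt.prodMk (hasDerivAt_id s) (hasDerivAt_const s b))

lemma hasDerivAt_c3 (a b : ℝ) (s : ℝ) :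
    HasDerivAt (fun s : ℝ => ((a, b, s) : ℝ × ℝ × ℝ)) e3 s :=
  HasDerivAt.prodMk (hasDerivAt_const s a) (HasDerivAt.prodMk (hasDerivAt_const s b) (hasDerivAt_id s))

section slices

variable {F : Type*} [NormedAddCommGroup F] [NormedSpace ℝ F]

lemma hasDerivAt_slice1 {g : ℝ × ℝ × ℝ → F} {q : ℝ × ℝ × ℝ} (hg : DifferentiableAt ℝ g q) :
    HasDerivAt (fun s => g (s, q.2.1, q.2.2)) (fderiv ℝ g q e1) q.1 :=
  hg.hasFDerivAt.comp_hasDerivAt q.1 (hasDerivAt_c1 q.2.1 q.2.2 q.1)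

lemma hasDerivAt_slice2 {g : ℝ × ℝ × ℝ → F} {q : ℝ × ℝ × ℝ} (hg : DifferentiableAt ℝ g q) :
    HasDerivAt (fun s => g (q.1, s, q.2.2)) (fderiv ℝ g q e2) q.2.1 :=
  hg.hasFDerivAt.comp_hasDerivAt q.2.1 (hasDerivAt_c2 q.1 q.2.2 q.2.1)

lemma hasDerivAt_slice3 {g : ℝ × ℝ × ℝ → F} {q : ℝ × ℝ × ℝ} (hg : DifferentiableAt ℝ g q) :
    HasDerivAt (fun s => g (q.1, q.2.1, s)) (fderiv ℝ g q e3) q.2.2 :=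
  hg.hasFDerivAt.comp_hasDerivAt q.2.2 (hasDerivAt_c3 q.1 q.2.1 q.2.2)

lemma slice1_ev {f g : ℝ × ℝ × ℝ → F} {q : ℝ × ℝ × ℝ} (h : f =ᶠ[nhds q] g) :
    (fun s => f (s, q.2.1, q.2.2)) =ᶠ[nhds q.1] (fun s => g (s, q.2.1, q.2.2)) := by
  have hc : ContinuousAt (fun s : ℝ => ((s, q.2.1, q.2.2) : ℝ × ℝ × ℝ)) q.1 := by fun_prop
  exact hc.tendsto.eventually h

lemma slice2_ev {f g : ℝ × ℝ × ℝ → F} {q : ℝ × ℝ × ℝ} (h : f =ᶠ[nhds q] g) :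
    (fun s => f (q.1, s, q.2.2)) =ᶠ[nhds q.2.1] (fun s => g (q.1, s, q.2.2)) := by
  have hc : ContinuousAt (fun s : ℝ => ((q.1, s, q.2.2) : ℝ × ℝ × ℝ)) q.2.1 := by fun_prop
  exact hc.tendsto.eventually h

lemma slice3_ev {f g : ℝ × ℝ × ℝ → F} {q : ℝ × ℝ × ℝ} (h : f =ᶠ[nhds q] g) :
    (fun s => f (q.1, q.2.1, s)) =ᶠ[nhds q.2.2] (fun s => g (q.1, q.2.1, s)) := by
  have hc : ContinuousAt (fun s : ℝ => ((q.1, q.2.1, s) : ℝ × ℝ × ℝ)) q.2.2 := by fun_prop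
  exact hc.tendsto.eventually h

end slices

lemma pdx1_congr {f g : ℝ × ℝ × ℝ → ℝ} {q : ℝ × ℝ × ℝ} (h : f =ᶠ[nhds q] g) :
    pdx1 f q = pdx1 g q := (slice1_ev h).deriv_eq

lemma pdx2_congr {f g : ℝ × ℝ × ℝ → ℝ} {q : ℝ × ℝ × ℝ} (h : f =ᶠ[nhds q] g) :
    pdx2 f q = pdx2 g q := (slice2_ev h).deriv_eq

lemma pdt_congr {f g : ℝ × ℝ × ℝ → ℝ} {q : ℝ × ℝ × ℝ} (h : f =ᶠ[nhds q] g) :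
    pdt f q = pdt g q := (slice3_ev h).deriv_eq

lemma pdx1_neg (f : ℝ × ℝ × ℝ → ℝ) (q : ℝ × ℝ × ℝ) :
    pdx1 (fun r => -(f r)) q = -pdx1 f q := by simp [pdx1, deriv.neg]

lemma pdx2_neg (f : ℝ × ℝ × ℝ → ℝ) (q : ℝ × ℝ × ℝ) :
    pdx2 (fun r => -(f r)) q = -pdx2 f q := by simp [pdx2, deriv.neg]

lemma pdx1_fderiv {g : ℝ × ℝ × ℝ → ℝ} {q : ℝ × ℝ × ℝ} (hg : DifferentiableAt ℝ g q) :
    pdx1 g q = fderiv ℝ g q e1 := (hasDerivAt_slice1 hg).deriv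

lemma pdx2_fderiv {g : ℝ × ℝ × ℝ → ℝ} {q : ℝ × ℝ × ℝ} (hg : DifferentiableAt ℝ g q) :
    pdx2 g q = fderiv ℝ g q e2 := (hasDerivAt_slice2 hg).deriv

lemma pdt_fderiv {g : ℝ × ℝ × ℝ → ℝ} {q : ℝ × ℝ × ℝ} (hg : DifferentiableAt ℝ g q) :
    pdt g q = fderiv ℝ g q e3 := (hasDerivAt_slice3 hg).deriv

-- slices of CLM-valued maps, evaluated at a fixed vector
lemma hasDerivAt_slice1_apply {g : ℝ × ℝ × ℝ → (ℝ × ℝ × ℝ →L[ℝ] ℝ)} {q : ℝ × ℝ × ℝ}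
    (hg : DifferentiableAt ℝ g q) (w : ℝ × ℝ × ℝ) :
    HasDerivAt (fun s => g (s, q.2.1, q.2.2) w) (fderiv ℝ g q e1 w) q.1 := by
  simpa using (hasDerivAt_slice1 hg).clm_apply (hasDerivAt_const q.1 w)

lemma hasDerivAt_slice2_apply {g : ℝ × ℝ × ℝ → (ℝ × ℝ × ℝ →L[ℝ] ℝ)} {q : ℝ × ℝ × ℝ}
    (hg : DifferentiableAt ℝ g q) (w : ℝ × ℝ × ℝ) :
    HasDerivAt (fun s => g (q.1, s, q.2.2) w) (fderiv ℝ g q e2 w) q.2.1 := by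
  simpa using (hasDerivAt_slice2 hg).clm_apply (hasDerivAt_const q.2.1 w)

lemma hasDerivAt_slice3_apply {g : ℝ × ℝ × ℝ → (ℝ × ℝ × ℝ →L[ℝ] ℝ)} {q : ℝ × ℝ × ℝ}
    (hg : DifferentiableAt ℝ g q) (w : ℝ × ℝ × ℝ) :
    HasDerivAt (fun s => g (q.1, q.2.1, s) w) (fderiv ℝ g q e3 w) q.2.2 := by
  simpa using (hasDerivAt_slice3 hg).clm_apply (hasDerivAt_const q.2.2 w)

section C2

variable {D : Set (ℝ × ℝ × ℝ)} {f : ℝ × ℝ × ℝ → ℝ} {q : ℝ × ℝ × ℝ}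

lemma diffAt (hD : IsOpen D) (hf : ContDiffOn ℝ 2 f D) (hq : q ∈ D) :
    DifferentiableAt ℝ f q :=
  (hf.differentiableOn two_ne_zero).differentiableAt (hD.mem_nhds hq)

lemma fderiv_diffAt (hD : IsOpen D) (hf : ContDiffOn ℝ 2 f D) (hq : q ∈ D) :
    DifferentiableAt ℝ (fderiv ℝ f) q :=
  (((hf.fderiv_of_isOpen (m := 1) hD (by norm_num)).differentiableOn
    one_ne_zero).differentiableAt (hD.mem_nhds hq) : DifferentiableAt ℝ (fderiv ℝ f) q)

lemma ev1 (hD : IsOpen D) (hf : ContDiffOn ℝ 2 f D) (hq : q ∈ D) :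
    pdx1 f =ᶠ[nhds q] fun r => fderiv ℝ f r e1 := by
  filter_upwards [hD.mem_nhds hq] with r hr
  exact pdx1_fderiv (diffAt hD hf hr)

lemma ev2 (hD : IsOpen D) (hf : ContDiffOn ℝ 2 f D) (hq : q ∈ D) :
    pdx2 f =ᶠ[nhds q] fun r => fderiv ℝ f r e2 := by
  filter_upwards [hD.mem_nhds hq] with r hr
  exact pdx2_fderiv (diffAt hD hf hr)

lemma evt (hD : IsOpen D) (hf : ContDiffOn ℝ 2 f D) (hq : q ∈ D) :
    pdt f =ᶠ[nhds q] fun r => fderiv ℝ f r e3 := by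
  filter_upwards [hD.mem_nhds hq] with r hr
  exact pdt_fderiv (diffAt hD hf hr)

lemma symmD2 (hD : IsOpen D) (hf : ContDiffOn ℝ 2 f D) (hq : q ∈ D) (a b : ℝ × ℝ × ℝ) :
    fderiv ℝ (fderiv ℝ f) q a b = fderiv ℝ (fderiv ℝ f) q b a := by
  apply second_derivative_symmetric_of_eventually
  · filter_upwards [hD.mem_nhds hq] with r hr
    exact (diffAt hD hf hr).hasFDerivAt
  · exact (fderiv_diffAt hD hf hq).hasFDerivAt

-- second partial derivative slice lemmas
lemma hda_1_1 (hD : IsOpen D) (hf : ContDiffOn ℝ 2 f D) (hq : q ∈ D) :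
    HasDerivAt (fun s => pdx1 f (s, q.2.1, q.2.2)) (fderiv ℝ (fderiv ℝ f) q e1 e1) q.1 :=
  (hasDerivAt_slice1_apply (fderiv_diffAt hD hf hq) e1).congr_of_eventuallyEq
    (slice1_ev (ev1 hD hf hq))

lemma hda_1_2 (hD : IsOpen D) (hf : ContDiffOn ℝ 2 f D) (hq : q ∈ D) :
    HasDerivAt (fun s => pdx2 f (s, q.2.1, q.2.2)) (fderiv ℝ (fderiv ℝ f) q e1 e2) q.1 :=
  (hasDerivAt_slice1_apply (fderiv_diffAt hD hf hq) e2).congr_of_eventuallyEq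
    (slice1_ev (ev2 hD hf hq))

lemma hda_1_3 (hD : IsOpen D) (hf : ContDiffOn ℝ 2 f D) (hq : q ∈ D) :
    HasDerivAt (fun s => pdt f (s, q.2.1, q.2.2)) (fderiv ℝ (fderiv ℝ f) q e1 e3) q.1 :=
  (hasDerivAt_slice1_apply (fderiv_diffAt hD hf hq) e3).congr_of_eventuallyEq
    (slice1_ev (evt hD hf hq))

lemma hda_2_1 (hD : IsOpen D) (hf : ContDiffOn ℝ 2 f D) (hq : q ∈ D) :
    HasDerivAt (fun s => pdx1 f (q.1, s, q.2.2)) (fderiv ℝ (fderiv ℝ f) q e2 e1) q.2.1 :=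
  (hasDerivAt_slice2_apply (fderiv_diffAt hD hf hq) e1).congr_of_eventuallyEq
    (slice2_ev (ev1 hD hf hq))

lemma hda_2_2 (hD : IsOpen D) (hf : ContDiffOn ℝ 2 f D) (hq : q ∈ D) :
    HasDerivAt (fun s => pdx2 f (q.1, s, q.2.2)) (fderiv ℝ (fderiv ℝ f) q e2 e2) q.2.1 :=
  (hasDerivAt_slice2_apply (fderiv_diffAt hD hf hq) e2).congr_of_eventuallyEq
    (slice2_ev (ev2 hD hf hq))

lemma hda_2_3 (hD : IsOpen D) (hf : ContDiffOn ℝ 2 f D) (hq : q ∈ D) :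
    HasDerivAt (fun s => pdt f (q.1, s, q.2.2)) (fderiv ℝ (fderiv ℝ f) q e2 e3) q.2.1 :=
  (hasDerivAt_slice2_apply (fderiv_diffAt hD hf hq) e3).congr_of_eventuallyEq
    (slice2_ev (evt hD hf hq))

lemma hda_3_1 (hD : IsOpen D) (hf : ContDiffOn ℝ 2 f D) (hq : q ∈ D) :
    HasDerivAt (fun s => pdx1 f (q.1, q.2.1, s)) (fderiv ℝ (fderiv ℝ f) q e3 e1) q.2.2 :=
  (hasDerivAt_slice3_apply (fderiv_diffAt hD hf hq) e1).congr_of_eventuallyEq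
    (slice3_ev (ev1 hD hf hq))

lemma hda_3_2 (hD : IsOpen D) (hf : ContDiffOn ℝ 2 f D) (hq : q ∈ D) :
    HasDerivAt (fun s => pdx2 f (q.1, q.2.1, s)) (fderiv ℝ (fderiv ℝ f) q e3 e2) q.2.2 :=
  (hasDerivAt_slice3_apply (fderiv_diffAt hD hf hq) e2).congr_of_eventuallyEq
    (slice3_ev (ev2 hD hf hq))

end C2

end Cor52


/-- Corollary 5.2: if `(L, M, N, g)` satisfies the Gauss–Codazzi equations and the
fluid variables `u, v, p` recovered from `(L, M, N)` satisfy the evolution equations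
and the pressure Poisson equation, then `(u, v, p)` satisfies the momentum equations
and `∂_t(∂₁u + ∂₂v) = 0`; in particular, if `∂₁u + ∂₂v = 0` at some time `t₀`, then
`(u, v, p)` solves the full incompressible Euler equations. -/
theorem statement11 (Ω : Set (ℝ × ℝ)) (hΩ : IsOpen Ω) (T : ℝ) (hT : 0 < T)
    (L M N g11 g12 g22 : ℝ × ℝ × ℝ → ℝ)
    (D : Set (ℝ × ℝ × ℝ))
    (hD : D = {q : ℝ × ℝ × ℝ | (q.1, q.2.1) ∈ Ω ∧ q.2.2 ∈ Set.Ioo 0 T})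
    (hLreg : ContDiffOn ℝ 2 L D) (hMreg : ContDiffOn ℝ 2 M D) (hNreg : ContDiffOn ℝ 2 N D)
    (hg11 : ContDiffOn ℝ 2 g11 D) (hg12 : ContDiffOn ℝ 2 g12 D) (hg22 : ContDiffOn ℝ 2 g22 D)
    (hdet : ∀ q ∈ D, 0 < detg g11 g12 g22 q)
    (hMneg : ∀ q ∈ D, M q < 0)
    (hGC : ∀ q ∈ D, GaussCodazzi L M N g11 g12 g22 q)
    (u v p : ℝ × ℝ × ℝ → ℝ)
    (hu : u = fun q =>
      Real.sqrt ((1 / 2) * (-(L q - N q) + Real.sqrt ((L q - N q) ^ 2 + 4 * (M q) ^ 2))))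
    (hv : v = fun q =>
      Real.sqrt ((1 / 2) * ((L q - N q) + Real.sqrt ((L q - N q) ^ 2 + 4 * (M q) ^ 2))))
    (hp : p = fun q => L q - (v q) ^ 2)
    (hevolu : ∀ q ∈ D, pdt u q =
      Gamma1_22 g11 g12 g22 q * L q - 2 * Gamma1_12 g11 g12 g22 q * M q
        + Gamma1_11 g11 g12 g22 q * N q)
    (hevolv : ∀ q ∈ D, pdt v q =
      Gamma2_22 g11 g12 g22 q * L q - 2 * Gamma2_12 g11 g12 g22 q * M q
        + Gamma2_11 g11 g12 g22 q * N q)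
    (hpoisson : ∀ q ∈ D,
      pdx1 (pdx1 (fun r => (u r) ^ 2)) q + 2 * pdx1 (pdx2 (fun r => u r * v r)) q
        + pdx2 (pdx2 (fun r => (v r) ^ 2)) q
      = -(pdx1 (pdx1 p) q + pdx2 (pdx2 p) q)) :
    (∀ q ∈ D,
      pdx1 (fun r => (u r) ^ 2 + p r) q + pdx2 (fun r => u r * v r) q = -(pdt u q) ∧
      pdx1 (fun r => u r * v r) q + pdx2 (fun r => (v r) ^ 2 + p r) q = -(pdt v q) ∧
      pdt (fun r => pdx1 u r + pdx2 v r) q = 0) ∧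
    (∀ t₀ ∈ Set.Ioo 0 T,
      (∀ q ∈ D, q.2.2 = t₀ → pdx1 u q + pdx2 v q = 0) →
      ∀ q ∈ D, pdx1 u q + pdx2 v q = 0) := by

  open Cor52 in
  have hDopen : IsOpen D := by
    rw [hD]
    have h1 : IsOpen {q : ℝ × ℝ × ℝ | (q.1, q.2.1) ∈ Ω} := hΩ.preimage (by fun_prop)
    have h2 : IsOpen {q : ℝ × ℝ × ℝ | q.2.2 ∈ Set.Ioo 0 T} :=
      isOpen_Ioo.preimage (by fun_prop)
    exact h1.inter h2
  have hDmem : ∀ {r : ℝ × ℝ × ℝ}, r ∈ D → D ∈ nhds r := fun hr => hDopen.mem_nhds hr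
  -- basic algebra
  have key : ∀ r, (L r - N r) ^ 2 ≤ (L r - N r) ^ 2 + 4 * (M r) ^ 2 := fun r => by
    nlinarith [sq_nonneg (M r)]
  have habs : ∀ r, |L r - N r| ≤ Real.sqrt ((L r - N r) ^ 2 + 4 * (M r) ^ 2) := fun r => by
    rw [← Real.sqrt_sq_eq_abs]; exact Real.sqrt_le_sqrt (key r)
  have hargu : ∀ r, 0 ≤ (1 / 2) * (-(L r - N r) + Real.sqrt ((L r - N r) ^ 2 + 4 * (M r) ^ 2)) :=
    fun r => by linarith [habs r, le_abs_self (L r - N r)]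
  have hargv : ∀ r, 0 ≤ (1 / 2) * ((L r - N r) + Real.sqrt ((L r - N r) ^ 2 + 4 * (M r) ^ 2)) :=
    fun r => by linarith [habs r, neg_abs_le (L r - N r)]
  have hu2 : ∀ r, u r ^ 2
      = (1 / 2) * (-(L r - N r) + Real.sqrt ((L r - N r) ^ 2 + 4 * (M r) ^ 2)) := fun r => by
    rw [hu]; exact Real.sq_sqrt (hargu r)
  have hv2 : ∀ r, v r ^ 2
      = (1 / 2) * ((L r - N r) + Real.sqrt ((L r - N r) ^ 2 + 4 * (M r) ^ 2)) := fun r => by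
    rw [hv]; exact Real.sq_sqrt (hargv r)
  have huvD : ∀ r ∈ D, u r * v r = -(M r) := fun r hr => by
    have hs2 : Real.sqrt ((L r - N r) ^ 2 + 4 * (M r) ^ 2) ^ 2
        = (L r - N r) ^ 2 + 4 * (M r) ^ 2 := Real.sq_sqrt (by positivity)
    have hprod : (1 / 2) * (-(L r - N r) + Real.sqrt ((L r - N r) ^ 2 + 4 * (M r) ^ 2))
        * ((1 / 2) * ((L r - N r) + Real.sqrt ((L r - N r) ^ 2 + 4 * (M r) ^ 2)))
        = (M r) ^ 2 := by linear_combination (1 / 4) * hs2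
    rw [hu, hv]
    show Real.sqrt _ * Real.sqrt _ = _
    rw [← Real.sqrt_mul (hargu r), hprod, Real.sqrt_sq_eq_abs, abs_of_neg (hMneg r hr)]
  -- regularity
  have hMne : ∀ r ∈ D, M r ≠ 0 := fun r hr => (hMneg r hr).ne
  have hpos : ∀ r ∈ D, 0 < (L r - N r) ^ 2 + 4 * (M r) ^ 2 := fun r hr => by
    have := hMne r hr; positivity
  have hsqreg : ContDiffOn ℝ 2
      (fun r => Real.sqrt ((L r - N r) ^ 2 + 4 * (M r) ^ 2)) D :=
    ContDiffOn.sqrt (((hLreg.sub hNreg).pow 2).add (contDiffOn_const.mul (hMreg.pow 2)))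
      (fun r hr => (hpos r hr).ne')
  have hsgt : ∀ r ∈ D, |L r - N r| < Real.sqrt ((L r - N r) ^ 2 + 4 * (M r) ^ 2) := fun r hr => by
    rw [← Real.sqrt_sq_eq_abs]
    refine Real.sqrt_lt_sqrt (sq_nonneg _) ?_
    have : 0 < 4 * (M r) ^ 2 := by have := hMne r hr; positivity
    linarith
  have huargpos : ∀ r ∈ D,
      0 < (1 / 2) * (-(L r - N r) + Real.sqrt ((L r - N r) ^ 2 + 4 * (M r) ^ 2)) := fun r hr => by
    linarith [hsgt r hr, le_abs_self (L r - N r)]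
  have hvargpos : ∀ r ∈ D,
      0 < (1 / 2) * ((L r - N r) + Real.sqrt ((L r - N r) ^ 2 + 4 * (M r) ^ 2)) := fun r hr => by
    linarith [hsgt r hr, neg_abs_le (L r - N r)]
  have hureg : ContDiffOn ℝ 2 u D := by
    rw [hu]
    exact ContDiffOn.sqrt (contDiffOn_const.mul ((hLreg.sub hNreg).neg.add hsqreg))
      (fun r hr => (huargpos r hr).ne')
  have hvreg : ContDiffOn ℝ 2 v D := by
    rw [hv]
    exact ContDiffOn.sqrt (contDiffOn_const.mul ((hLreg.sub hNreg).add hsqreg))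
      (fun r hr => (hvargpos r hr).ne')
  have hpreg : ContDiffOn ℝ 2 p D := by
    rw [hp]; exact hLreg.sub (hvreg.pow 2)
  -- pointwise function identities
  have hu2pN : (fun r => u r ^ 2 + p r) = N := funext fun r => by
    simp only [hp]; rw [hu2 r, hv2 r]; ring
  have hv2pL : (fun r => v r ^ 2 + p r) = L := funext fun r => by
    simp only [hp]; ring
  have hu2NP : (fun r => u r ^ 2) = fun r => N r - p r := funext fun r => by
    have h := congrFun hu2pN r
    linarith
  have hv2LP : (fun r => v r ^ 2) = fun r => L r - p r := funext fun r => by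
    simp only [hp]; ring
  have huv_ev : ∀ {r : ℝ × ℝ × ℝ}, r ∈ D →
      (fun r' => u r' * v r') =ᶠ[nhds r] fun r' => -(M r') := fun {r} hr => by
    filter_upwards [hDmem hr] with r' hr'
    exact huvD r' hr'
  -- main part 1
  have main : ∀ q ∈ D,
      pdx1 (fun r => (u r) ^ 2 + p r) q + pdx2 (fun r => u r * v r) q = -(pdt u q) ∧
      pdx1 (fun r => u r * v r) q + pdx2 (fun r => (v r) ^ 2 + p r) q = -(pdt v q) ∧
      pdt (fun r => pdx1 u r + pdx2 v r) q = 0 := by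
    intro q hq
    obtain ⟨hgc1, hgc2, -⟩ := hGC q hq
    refine ⟨?_, ?_, ?_⟩
    · -- first momentum equation
      have e1a : pdx1 (fun r => (u r) ^ 2 + p r) q = pdx1 N q := by rw [hu2pN]
      have e1b : pdx2 (fun r => u r * v r) q = -(pdx2 M q) := by
        rw [pdx2_congr (huv_ev hq), pdx2_neg]
      rw [e1a, e1b, hevolu q hq]
      linarith [hgc1]
    · -- second momentum equation
      have e2a : pdx1 (fun r => u r * v r) q = -(pdx1 M q) := by
        rw [pdx1_congr (huv_ev hq), pdx1_neg]
      have e2b : pdx2 (fun r => (v r) ^ 2 + p r) q = pdx2 L q := by rw [hv2pL]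
      rw [e2a, e2b, hevolv q hq]
      linarith [hgc2]
    · -- time derivative of the divergence vanishes
      have hpdtu_ev : pdt u =ᶠ[nhds q] fun r => pdx2 M r - pdx1 N r := by
        filter_upwards [hDmem hq] with r hr
        have h1 := (hGC r hr).1
        have h2 := hevolu r hr
        linarith
      have hpdtv_ev : pdt v =ᶠ[nhds q] fun r => pdx1 M r - pdx2 L r := by
        filter_upwards [hDmem hq] with r hr
        have h1 := (hGC r hr).2.1
        have h2 := hevolv r hr
        linarith
      have h3 : pdt (fun r => pdx1 u r + pdx2 v r) q
          = fderiv ℝ (fderiv ℝ u) q e3 e1 + fderiv ℝ (fderiv ℝ v) q e3 e2 :=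
        ((hda_3_1 hDopen hureg hq).add (hda_3_2 hDopen hvreg hq)).deriv
      have hswu : fderiv ℝ (fderiv ℝ u) q e3 e1 = fderiv ℝ (fderiv ℝ u) q e1 e3 :=
        symmD2 hDopen hureg hq e3 e1
      have hswv : fderiv ℝ (fderiv ℝ v) q e3 e2 = fderiv ℝ (fderiv ℝ v) q e2 e3 :=
        symmD2 hDopen hvreg hq e3 e2
      have h4 : fderiv ℝ (fderiv ℝ u) q e1 e3
          = fderiv ℝ (fderiv ℝ M) q e1 e2 - fderiv ℝ (fderiv ℝ N) q e1 e1 := by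
        have l1 : pdx1 (pdt u) q = pdx1 (fun r => pdx2 M r - pdx1 N r) q :=
          pdx1_congr hpdtu_ev
        have r1 : pdx1 (pdt u) q = fderiv ℝ (fderiv ℝ u) q e1 e3 :=
          (hda_1_3 hDopen hureg hq).deriv
        have r2 : pdx1 (fun r => pdx2 M r - pdx1 N r) q
            = fderiv ℝ (fderiv ℝ M) q e1 e2 - fderiv ℝ (fderiv ℝ N) q e1 e1 :=
          ((hda_1_2 hDopen hMreg hq).sub (hda_1_1 hDopen hNreg hq)).deriv
        linarith
      have h5 : fderiv ℝ (fderiv ℝ v) q e2 e3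
          = fderiv ℝ (fderiv ℝ M) q e2 e1 - fderiv ℝ (fderiv ℝ L) q e2 e2 := by
        have l1 : pdx2 (pdt v) q = pdx2 (fun r => pdx1 M r - pdx2 L r) q :=
          pdx2_congr hpdtv_ev
        have r1 : pdx2 (pdt v) q = fderiv ℝ (fderiv ℝ v) q e2 e3 :=
          (hda_2_3 hDopen hvreg hq).deriv
        have r2 : pdx2 (fun r => pdx1 M r - pdx2 L r) q
            = fderiv ℝ (fderiv ℝ M) q e2 e1 - fderiv ℝ (fderiv ℝ L) q e2 e2 :=
          ((hda_2_1 hDopen hMreg hq).sub (hda_2_2 hDopen hLreg hq)).deriv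
        linarith
      have hswM : fderiv ℝ (fderiv ℝ M) q e2 e1 = fderiv ℝ (fderiv ℝ M) q e1 e2 :=
        symmD2 hDopen hMreg hq e2 e1
      -- Poisson equation in terms of second fderivs
      have hP := hpoisson q hq
      have pa : pdx1 (pdx1 (fun r => (u r) ^ 2)) q
          = fderiv ℝ (fderiv ℝ N) q e1 e1 - fderiv ℝ (fderiv ℝ p) q e1 e1 := by
        rw [hu2NP]
        have inner_ev : pdx1 (fun r => N r - p r)
            =ᶠ[nhds q] fun r => fderiv ℝ N r e1 - fderiv ℝ p r e1 := by
          filter_upwards [hDmem hq] with r hr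
          exact ((hasDerivAt_slice1 (diffAt hDopen hNreg hr)).sub
            (hasDerivAt_slice1 (diffAt hDopen hpreg hr))).deriv
        rw [pdx1_congr inner_ev]
        exact ((hasDerivAt_slice1_apply (fderiv_diffAt hDopen hNreg hq) e1).sub
          (hasDerivAt_slice1_apply (fderiv_diffAt hDopen hpreg hq) e1)).deriv
      have pb : pdx2 (pdx2 (fun r => (v r) ^ 2)) q
          = fderiv ℝ (fderiv ℝ L) q e2 e2 - fderiv ℝ (fderiv ℝ p) q e2 e2 := by
        rw [hv2LP]
        have inner_ev : pdx2 (fun r => L r - p r)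
            =ᶠ[nhds q] fun r => fderiv ℝ L r e2 - fderiv ℝ p r e2 := by
          filter_upwards [hDmem hq] with r hr
          exact ((hasDerivAt_slice2 (diffAt hDopen hLreg hr)).sub
            (hasDerivAt_slice2 (diffAt hDopen hpreg hr))).deriv
        rw [pdx2_congr inner_ev]
        exact ((hasDerivAt_slice2_apply (fderiv_diffAt hDopen hLreg hq) e2).sub
          (hasDerivAt_slice2_apply (fderiv_diffAt hDopen hpreg hq) e2)).deriv
      have pc : pdx1 (pdx2 (fun r => u r * v r)) q = -(fderiv ℝ (fderiv ℝ M) q e1 e2) := by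
        have inner_ev : pdx2 (fun r => u r * v r) =ᶠ[nhds q] fun r => -(pdx2 M r) := by
          filter_upwards [hDmem hq] with r hr
          rw [pdx2_congr (huv_ev hr), pdx2_neg]
        rw [pdx1_congr inner_ev]
        exact (hda_1_2 hDopen hMreg hq).neg.deriv
      have pd : pdx1 (pdx1 p) q = fderiv ℝ (fderiv ℝ p) q e1 e1 :=
        (hda_1_1 hDopen hpreg hq).deriv
      have pe : pdx2 (pdx2 p) q = fderiv ℝ (fderiv ℝ p) q e2 e2 :=
        (hda_2_2 hDopen hpreg hq).deriv
      rw [pa, pb, pc, pd, pe] at hP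
      rw [h3]
      linarith [hswu, hswv, h4, h5, hswM, hP]
  refine ⟨main, ?_⟩
  -- part 2
  intro t₀ ht₀ hzero q hq
  have hq' : (q.1, q.2.1) ∈ Ω ∧ q.2.2 ∈ Set.Ioo 0 T := by rw [hD] at hq; exact hq
  have hmem : ∀ s ∈ Set.Ioo 0 T, ((q.1, q.2.1, s) : ℝ × ℝ × ℝ) ∈ D := fun s hs => by
    rw [hD]; exact ⟨hq'.1, hs⟩
  set φ : ℝ → ℝ := fun s => pdx1 u (q.1, q.2.1, s) + pdx2 v (q.1, q.2.1, s) with hφ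
  have hder : ∀ s ∈ Set.Ioo 0 T, HasDerivAt φ 0 s := by
    intro s hs
    have hr := hmem s hs
    have h : HasDerivAt φ
        (fderiv ℝ (fderiv ℝ u) (q.1, q.2.1, s) e3 e1
          + fderiv ℝ (fderiv ℝ v) (q.1, q.2.1, s) e3 e2) s :=
      (hda_3_1 hDopen hureg hr).add (hda_3_2 hDopen hvreg hr)
    have heq : pdt (fun r => pdx1 u r + pdx2 v r) ((q.1, q.2.1, s) : ℝ × ℝ × ℝ)
        = fderiv ℝ (fderiv ℝ u) (q.1, q.2.1, s) e3 e1
          + fderiv ℝ (fderiv ℝ v) (q.1, q.2.1, s) e3 e2 :=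
      ((hda_3_1 hDopen hureg hr).add (hda_3_2 hDopen hvreg hr)).deriv
    have h0 := (main _ hr).2.2
    have hval : fderiv ℝ (fderiv ℝ u) (q.1, q.2.1, s) e3 e1
        + fderiv ℝ (fderiv ℝ v) (q.1, q.2.1, s) e3 e2 = 0 := by
      rw [← heq]; exact h0
    exact hval ▸ h
  have hdiff : DifferentiableOn ℝ φ (Set.Ioo 0 T) := fun s hs =>
    ((hder s hs).differentiableAt).differentiableWithinAt
  have hfz : ∀ s ∈ Set.Ioo 0 T, fderivWithin ℝ φ (Set.Ioo 0 T) s = 0 := by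
    intro s hs
    rw [fderivWithin_of_isOpen isOpen_Ioo hs, (hder s hs).hasFDerivAt.fderiv]
    ext z
    simp
  have hconst := (convex_Ioo (0 : ℝ) T).is_const_of_fderivWithin_eq_zero hdiff hfz hq'.2 ht₀
  have hz0 : φ t₀ = 0 :=
    hzero (q.1, q.2.1, t₀) (by rw [hD]; exact ⟨hq'.1, ht₀⟩) rfl
  exact hconst.trans hz0
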